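/- (Corollary to Theorem 2) Let I be a base and let D ⊆ ℂ^J be a connected open neighborhood of 0. If F¹(β,x) and F²(β,x) are two analytic solutions on V × D of the reduced GG-system (R1), (R2) associated with A and I, and F¹(β,0) = F²(β,0) for all β ∈ V, then F¹ = F² on V × D. In other words, a solution regular in a neighborhood of x = 0 is uniquely determined by the initial term of its power series expansion in powers of x. -/

import Mathlib

open Filter Set Topology

/-- Auxiliary: `iteratedDerivWithin` of a finite sum of constant multiples. -/
lemma stmt10_aux_sum {ι : Type*} {S : Set ℂ} (hS : UniqueDiffOn ℂ S) {x0 : ℂ}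
    (hx : x0 ∈ S) (n : ℕ) (c : ι → ℂ) (f : ι → ℂ → ℂ)
    (hf : ∀ i, ContDiffOn ℂ n (f i) S) (s : Finset ι) :
    iteratedDerivWithin n (fun t => ∑ i ∈ s, c i * f i t) S x0
      = ∑ i ∈ s, c i * iteratedDerivWithin n (f i) S x0 := by
  classical
  induction s using Finset.induction with
  | empty =>
    simp only [Finset.sum_empty]
    rw [iteratedDerivWithin_eq_iteratedFDerivWithin]
    rw [show (fun _ : ℂ => (0 : ℂ)) = (0 : ℂ → ℂ) from rfl]
    rw [show (0 : ℂ → ℂ) = (fun _ : ℂ => (0 : ℂ)) from rfl, iteratedFDerivWithin_zero_fun]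
    simp
  | insert a s ha ih =>
    have h1 : ContDiffOn ℂ n (fun t => c a * f a t) S := contDiffOn_const.mul (hf a)
    have h2 : ContDiffOn ℂ n (fun t => ∑ i ∈ s, c i * f i t) S := by
      apply ContDiffOn.sum (fun i _ => contDiffOn_const.mul (hf i))
    simp only [Finset.sum_insert ha]
    rw [show (fun t => c a * f a t + ∑ i ∈ s, c i * f i t)
        = ((fun t => c a * f a t) + fun t => ∑ i ∈ s, c i * f i t) from rfl,
      iteratedDerivWithin_add hx hS (h1 x0 hx) (h2 x0 hx), ih,
      iteratedDerivWithin_const_mul hx hS (c a) (hf a x0 hx)]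

/-- Corollary to Theorem 2: two analytic solutions of the reduced GG-system (R1),(R2)
associated with `A` and a base `I`, on `V × D` with `D` a connected open neighborhood of
`x = 0`, that agree at `x = 0` for every `β`, agree on all of `V × D`. -/
theorem stmt10 {V : Type*} [NormedAddCommGroup V] [NormedSpace ℂ V] [FiniteDimensional ℂ V]
    {N : ℕ} (ω : Fin N → V)
    (hspan : Submodule.span ℂ (Set.range ω) = ⊤)
    (I : Finset (Fin N)) (hcard : I.card = Module.finrank ℂ V)
    (hind : LinearIndependent ℂ (fun i : I => ω i))
    (c : V → Fin N → ℂ) (hc : ∀ β : V, ∑ i ∈ I, c β i • ω i = β)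
    (D : Set ({j : Fin N // j ∉ I} → ℂ)) (hDopen : IsOpen D) (hDconn : IsConnected D)
    (hD0 : (0 : _) ∈ D)
    (F1 F2 : V → ({j : Fin N // j ∉ I} → ℂ) → ℂ)
    (hF1A : AnalyticOnNhd ℂ (fun p : V × ({j : Fin N // j ∉ I} → ℂ) => F1 p.1 p.2)
      (Set.univ ×ˢ D))
    (hF2A : AnalyticOnNhd ℂ (fun p : V × ({j : Fin N // j ∉ I} → ℂ) => F2 p.1 p.2)
      (Set.univ ×ˢ D))
    (hR1₁ : ∀ (β : V), ∀ x ∈ D, ∀ i ∈ I,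
      c β i * F1 β x +
        ∑ j : {j : Fin N // j ∉ I}, c (-(ω j.1)) i * x j * fderiv ℂ (F1 β) x (Pi.single j 1)
        = F1 (β - ω i) x)
    (hR2₁ : ∀ (β : V), ∀ x ∈ D, ∀ j : {j : Fin N // j ∉ I},
      fderiv ℂ (F1 β) x (Pi.single j 1) = F1 (β - ω j.1) x)
    (hR1₂ : ∀ (β : V), ∀ x ∈ D, ∀ i ∈ I,
      c β i * F2 β x +
        ∑ j : {j : Fin N // j ∉ I}, c (-(ω j.1)) i * x j * fderiv ℂ (F2 β) x (Pi.single j 1)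
        = F2 (β - ω i) x)
    (hR2₂ : ∀ (β : V), ∀ x ∈ D, ∀ j : {j : Fin N // j ∉ I},
      fderiv ℂ (F2 β) x (Pi.single j 1) = F2 (β - ω j.1) x)
    (h0 : ∀ β : V, F1 β 0 = F2 β 0) :
    ∀ (β : V), ∀ x ∈ D, F1 β x = F2 β x := by
  classical
  -- analyticity of slices
  have h1A : ∀ β : V, AnalyticOnNhd ℂ (F1 β) D := by
    intro β y hy
    exact (hF1A (β, y) ⟨Set.mem_univ _, hy⟩).comp (analyticAt_const.prod analyticAt_id)
  have h2A : ∀ β : V, AnalyticOnNhd ℂ (F2 β) D := by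
    intro β y hy
    exact (hF2A (β, y) ⟨Set.mem_univ _, hy⟩).comp (analyticAt_const.prod analyticAt_id)
  have hGA : ∀ β : V, AnalyticOnNhd ℂ (fun y => F1 β y - F2 β y) D :=
    fun β => (h1A β).sub (h2A β)
  have hG0 : ∀ β : V, F1 β 0 - F2 β 0 = 0 := fun β => sub_eq_zero_of_eq (h0 β)
  -- fderiv of the difference, on all directions
  have hfder : ∀ β : V, ∀ y ∈ D, ∀ v : {j : Fin N // j ∉ I} → ℂ,
      fderiv ℂ (fun z => F1 β z - F2 β z) y v
        = ∑ j : {j : Fin N // j ∉ I}, v j * (F1 (β - ω j.1) y - F2 (β - ω j.1) y) := by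
    intro β y hy v
    have hd1 : DifferentiableAt ℂ (F1 β) y := (h1A β y hy).differentiableAt
    have hd2 : DifferentiableAt ℂ (F2 β) y := (h2A β y hy).differentiableAt
    have hLsub : fderiv ℂ (fun z => F1 β z - F2 β z) y
        = fderiv ℂ (F1 β) y - fderiv ℂ (F2 β) y := fderiv_sub hd1 hd2
    have hL : ∀ j : {j : Fin N // j ∉ I},
        fderiv ℂ (fun z => F1 β z - F2 β z) y (Pi.single j 1)
          = F1 (β - ω j.1) y - F2 (β - ω j.1) y := by
      intro j
      rw [hLsub]
      simp only [ContinuousLinearMap.sub_apply]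
      rw [hR2₁ β y hy j, hR2₂ β y hy j]
    have hv : v = ∑ j : {j : Fin N // j ∉ I},
        v j • (Pi.single j 1 : {j : Fin N // j ∉ I} → ℂ) := by
      have h1 : ∀ j : {j : Fin N // j ∉ I},
          v j • (Pi.single j 1 : {j : Fin N // j ∉ I} → ℂ) = Pi.single j (v j) := by
        intro j
        rw [← Pi.single_smul, smul_eq_mul, mul_one]
      simp_rw [h1]
      exact (Finset.univ_sum_single v).symm
    conv_lhs => rw [hv]
    rw [map_sum]
    refine Finset.sum_congr rfl fun j _ => ?_
    rw [ContinuousLinearMap.map_smul, hL j, smul_eq_mul]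
  -- a ball around 0 inside D
  obtain ⟨r, hr, hrD⟩ : ∃ r > 0, Metric.ball (0 : {j : Fin N // j ∉ I} → ℂ) r ⊆ D :=
    Metric.isOpen_iff.mp hDopen 0 hD0
  -- vanishing on the ball
  have hzero_ball : ∀ β : V, ∀ x ∈ Metric.ball (0 : {j : Fin N // j ∉ I} → ℂ) r,
      F1 β x - F2 β x = 0 := by
    intro β x hxball
    by_cases hx0 : x = 0
    · subst hx0; exact hG0 β
    have hxn : 0 < ‖x‖ := norm_pos_iff.mpr hx0
    have hxr : ‖x‖ < r := by simpa [Metric.mem_ball, dist_zero_right] using hxball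
    set S : Set ℂ := Metric.ball (0 : ℂ) (r / ‖x‖) with hSdef
    have hSopen : IsOpen S := Metric.isOpen_ball
    have hSu : UniqueDiffOn ℂ S := hSopen.uniqueDiffOn
    have h0S : (0 : ℂ) ∈ S := by
      simp only [hSdef, Metric.mem_ball, dist_self]
      positivity
    have h1S : (1 : ℂ) ∈ S := by
      simp only [hSdef, Metric.mem_ball, dist_zero_right, norm_one]
      exact (one_lt_div hxn).mpr hxr
    have hSsub : ∀ t ∈ S, t • x ∈ Metric.ball (0 : {j : Fin N // j ∉ I} → ℂ) r := by
      intro t ht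
      simp only [hSdef, Metric.mem_ball, dist_zero_right] at ht ⊢
      rw [norm_smul]
      calc ‖t‖ * ‖x‖ < (r / ‖x‖) * ‖x‖ := by
            exact mul_lt_mul_of_pos_right ht hxn
        _ = r := div_mul_cancel₀ r hxn.ne'
    set g : V → ℂ → ℂ := fun γ t => F1 γ (t • x) - F2 γ (t • x) with hgdef
    have hgA : ∀ γ : V, AnalyticOnNhd ℂ (g γ) S := by
      intro γ t ht
      have haux : AnalyticAt ℂ (fun s : ℂ => s • x) t := analyticAt_id.smul analyticAt_const
      have hcomp : AnalyticAt ℂ ((fun z => F1 γ z - F2 γ z) ∘ (fun s : ℂ => s • x)) t :=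
        AnalyticAt.comp (f := fun s : ℂ => s • x) (x := t)
          (hGA γ _ (hrD (hSsub t ht))) haux
      exact hcomp
    have hgd : ∀ γ : V, ∀ t ∈ S,
        HasDerivAt (g γ) (∑ j : {j : Fin N // j ∉ I}, x j * g (γ - ω j.1) t) t := by
      intro γ t ht
      have hxD' : t • x ∈ D := hrD (hSsub t ht)
      have hsm : HasDerivAt (fun s : ℂ => s • x) x t := by
        simpa using (hasDerivAt_id t).smul_const x
      have hdG : DifferentiableAt ℂ (fun z => F1 γ z - F2 γ z) (t • x) :=
        (hGA γ _ hxD').differentiableAt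
      have hcomp := hdG.hasFDerivAt.comp_hasDerivAt t hsm
      have heq := hfder γ _ hxD' x
      simp only [heq] at hcomp
      exact hcomp
    -- all iterated derivatives at 0 vanish
    have hkey : ∀ n : ℕ, ∀ γ : V, iteratedDerivWithin n (g γ) S 0 = 0 := by
      intro n
      induction n with
      | zero =>
        intro γ
        rw [iteratedDerivWithin_zero]
        simpa [hgdef] using hG0 γ
      | succ n ih =>
        intro γ
        rw [iteratedDerivWithin_succ']
        have hEq : Set.EqOn (derivWithin (g γ) S)
            (fun t => ∑ j : {j : Fin N // j ∉ I}, x j * g (γ - ω j.1) t) S := by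
          intro t ht
          rw [derivWithin_of_isOpen hSopen ht]
          exact (hgd γ t ht).deriv
        rw [iteratedDerivWithin_congr hEq h0S]
        rw [stmt10_aux_sum hSu h0S n (fun j => x j) (fun j => g (γ - ω j.1))
          (fun j => (hgA _).contDiffOn hSu) Finset.univ]
        simp [ih]
    -- hence g β vanishes near 0
    obtain ⟨p, hp⟩ := hgA β 0 h0S
    obtain ⟨ρ, hpb⟩ := hp
    have hEv : ∀ᶠ y in 𝓝 (0 : ℂ), g β y = 0 := by
      filter_upwards [EMetric.isOpen_ball.mem_nhds (EMetric.mem_ball_self hpb.r_pos)]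
        with y hy
      have hs := hpb.hasSum_iteratedFDeriv hy
      have hterm : ∀ n : ℕ,
          (n.factorial : ℂ)⁻¹ * iteratedFDeriv ℂ n (g β) 0 (fun _ => y) = 0 := by
        intro n
        have h1 : iteratedFDerivWithin ℂ n (g β) S 0 = iteratedFDeriv ℂ n (g β) 0 :=
          iteratedFDerivWithin_of_isOpen n hSopen h0S
        have h2 : iteratedFDeriv ℂ n (g β) 0 (fun _ => y)
            = y ^ n • iteratedFDeriv ℂ n (g β) 0 (fun _ => (1 : ℂ)) := by
          have hms := (iteratedFDeriv ℂ n (g β) 0).map_smul_univ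
            (fun _ : Fin n => y) (fun _ => (1 : ℂ))
          simpa [smul_eq_mul, mul_one, Finset.prod_const] using hms
        rw [h2, ← h1, ← iteratedDerivWithin_eq_iteratedFDerivWithin, hkey n β]
        simp
      have hsz : HasSum (fun _ : ℕ => (0 : ℂ)) (g β (0 + y)) := by
        simpa [hterm] using hs
      have hz : g β (0 + y) = 0 := (hsz.unique hasSum_zero)
      simpa using hz
    -- identity theorem on S, evaluated at t = 1
    have hEqS : Set.EqOn (g β) 0 S :=
      (hgA β).eqOn_zero_of_preconnected_of_eventuallyEq_zero
        ((convex_ball (0 : ℂ) (r / ‖x‖)).isPreconnected) h0S hEv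
    have := hEqS h1S
    simpa [hgdef] using this
  -- identity theorem on D
  intro β x hxD
  have hEvD : (fun y => F1 β y - F2 β y) =ᶠ[𝓝 0] 0 := by
    filter_upwards [Metric.ball_mem_nhds (0 : {j : Fin N // j ∉ I} → ℂ) hr] with y hy
    exact hzero_ball β y hy
  have hEqD : Set.EqOn (fun y => F1 β y - F2 β y) 0 D :=
    (hGA β).eqOn_zero_of_preconnected_of_eventuallyEq_zero
      hDconn.isPreconnected hD0 hEvD
  have := hEqD hxD
  simpa [sub_eq_zero] using this
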